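/- For α ∈ (0,1) and posterior density q with the same support as the exponential family, the partial derivative of D_α(q ∥ p_θ) with respect to θⱼ equals η_j(θ) − η_{α,j}(θ), where η_j(θ) = E_θ[cⱼ] and η_{α,j}(θ) = E_θ[(q/p_θ)ᵅ cⱼ] / E_θ[(q/p_θ)ᵅ]. -/

import Mathlib

open MeasureTheory Real Filter Metric

lemma aux_hasDerivAt_integral_exp {X : Type*} [MeasurableSpace X] (μ : Measure X)
    (f g : X → ℝ) (hf : AEStronglyMeasurable f μ) (hg : AEStronglyMeasurable g μ)
    (t₀ δ : ℝ) (hδ : 0 < δ)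
    (h0 : Integrable (fun x => f x * Real.exp (t₀ * g x)) μ)
    (hplus : Integrable (fun x => f x * Real.exp ((t₀ + δ) * g x)) μ)
    (hminus : Integrable (fun x => f x * Real.exp ((t₀ - δ) * g x)) μ) :
    HasDerivAt (fun t => ∫ x, f x * Real.exp (t * g x) ∂μ)
      (∫ x, f x * g x * Real.exp (t₀ * g x) ∂μ) t₀ := by
  have hmeas : ∀ t : ℝ, AEStronglyMeasurable (fun x => f x * Real.exp (t * g x)) μ := by
    intro t
    exact hf.mul ((Real.continuous_exp.comp (continuous_const.mul continuous_id)).comp_aestronglyMeasurable hg)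
  have hF'meas : AEStronglyMeasurable (fun x => f x * g x * Real.exp (t₀ * g x)) μ :=
    (hf.mul hg).mul ((Real.continuous_exp.comp (continuous_const.mul continuous_id)).comp_aestronglyMeasurable hg)
  have key := hasDerivAt_integral_of_dominated_loc_of_deriv_le (s := ball t₀ (δ / 2)) (ball_mem_nhds t₀ (by positivity))
    (F := fun t x => f x * Real.exp (t * g x))
    (F' := fun t x => f x * g x * Real.exp (t * g x))
    (bound := fun x => (2 / δ) * (|f x| * Real.exp ((t₀ + δ) * g x) + |f x| * Real.exp ((t₀ - δ) * g x)))
    (Eventually.of_forall hmeas) h0 hF'meas ?_ ?_ ?_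
  · exact key.2
  · -- bound
    refine Eventually.of_forall fun x => fun t ht => ?_
    rw [Real.norm_eq_abs]
    have habs : |f x * g x * Real.exp (t * g x)| = |f x| * (|g x| * Real.exp (t * g x)) := by
      rw [abs_mul, abs_mul, abs_of_pos (Real.exp_pos _)]; ring
    rw [habs]
    have hdist : |t - t₀| < δ / 2 := by
      have := mem_ball_iff_norm.mp ht; simpa [Real.norm_eq_abs] using this
    have h1 : |g x| ≤ (2 / δ) * Real.exp (δ / 2 * |g x|) := by
      have := Real.add_one_le_exp (δ / 2 * |g x|)
      have h2 : δ / 2 * |g x| ≤ Real.exp (δ / 2 * |g x|) := by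
        nlinarith [abs_nonneg (g x), Real.exp_pos (δ / 2 * |g x|)]
      calc |g x| = (2 / δ) * (δ / 2 * |g x|) := by field_simp
        _ ≤ (2 / δ) * Real.exp (δ / 2 * |g x|) := by
            apply mul_le_mul_of_nonneg_left h2 (by positivity)
    have h3 : t * g x ≤ t₀ * g x + δ / 2 * |g x| := by
      have : (t - t₀) * g x ≤ |t - t₀| * |g x| := le_trans (le_abs_self _) (by rw [abs_mul])
      nlinarith [abs_nonneg (g x)]
    have h4 : |g x| * Real.exp (t * g x) ≤ (2 / δ) * Real.exp (t₀ * g x + δ * |g x|) := by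
      calc |g x| * Real.exp (t * g x)
          ≤ ((2 / δ) * Real.exp (δ / 2 * |g x|)) * Real.exp (t₀ * g x + δ / 2 * |g x|) := by
            apply mul_le_mul h1 (Real.exp_le_exp.mpr h3) (le_of_lt (Real.exp_pos _)) (by positivity)
        _ = (2 / δ) * Real.exp (t₀ * g x + δ * |g x|) := by
            rw [mul_assoc, ← Real.exp_add]; ring_nf
    have h5 : Real.exp (t₀ * g x + δ * |g x|) ≤ Real.exp ((t₀ + δ) * g x) + Real.exp ((t₀ - δ) * g x) := by
      rcases le_or_gt 0 (g x) with hgx | hgx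
      · rw [abs_of_nonneg hgx]
        have : t₀ * g x + δ * g x = (t₀ + δ) * g x := by ring
        rw [this]
        nlinarith [Real.exp_pos ((t₀ - δ) * g x)]
      · rw [abs_of_neg hgx]
        have : t₀ * g x + δ * -g x = (t₀ - δ) * g x := by ring
        rw [this]
        nlinarith [Real.exp_pos ((t₀ + δ) * g x)]
    calc |f x| * (|g x| * Real.exp (t * g x))
        ≤ |f x| * ((2 / δ) * (Real.exp ((t₀ + δ) * g x) + Real.exp ((t₀ - δ) * g x))) := by
          apply mul_le_mul_of_nonneg_left _ (abs_nonneg _)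
          exact h4.trans (mul_le_mul_of_nonneg_left h5 (by positivity))
      _ = (2 / δ) * (|f x| * Real.exp ((t₀ + δ) * g x) + |f x| * Real.exp ((t₀ - δ) * g x)) := by ring
  · -- bound integrable
    apply Integrable.const_mul
    have h1 : Integrable (fun x => |f x| * Real.exp ((t₀ + δ) * g x)) μ := by
      have := hplus.abs
      refine this.congr (Eventually.of_forall fun x => ?_)
      simp [abs_mul, abs_of_pos (Real.exp_pos _)]
    have h2 : Integrable (fun x => |f x| * Real.exp ((t₀ - δ) * g x)) μ := by
      have := hminus.abs
      refine this.congr (Eventually.of_forall fun x => ?_)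
      simp [abs_mul, abs_of_pos (Real.exp_pos _)]
    exact h1.add h2
  · -- differentiability
    refine Eventually.of_forall fun x => fun t _ => ?_
    have : HasDerivAt (fun s => s * g x) (g x) t := by
      simpa using (hasDerivAt_id t).mul_const (g x)
    have := (this.exp).const_mul (f x)
    refine this.congr_deriv ?_
    ring

/-- Partial derivative of the α-Rényi divergence `θ ↦ D_α(q ∥ p_θ)` with respect to the
`j`-th natural parameter equals `η_j(θ) − η_{α,j}(θ)`, where `η_j(θ) = E_θ[c_j]` and
`η_{α,j}(θ) = E_θ[(q/p_θ)^α c_j] / E_θ[(q/p_θ)^α]`. -/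
theorem renyi_partial_derivative
    {d m : ℕ} (c : (Fin d → ℝ) → (Fin m → ℝ)) (hc : Measurable c)
    (D : Set (Fin d → ℝ)) (hD : MeasurableSet D)
    (Θ : Set (Fin m → ℝ)) (hΘopen : IsOpen Θ)
    (hΘ : Θ = {θ : Fin m → ℝ |
      IntegrableOn (fun x => Real.exp (∑ i, c x i * θ i)) D volume})
    (ψ : (Fin m → ℝ) → ℝ)
    (hψ : ψ = fun θ => Real.log (∫ x in D, Real.exp (∑ i, c x i * θ i)))
    (p : (Fin m → ℝ) → (Fin d → ℝ) → ℝ)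
    (hp : p = fun θ x => Real.exp ((∑ i, c x i * θ i) - ψ θ))
    (α : ℝ) (hα : α ∈ Set.Ioo (0 : ℝ) 1)
    (q : (Fin d → ℝ) → ℝ) (hqmeas : Measurable q)
    (hq0 : ∀ x ∈ D, 0 < q x) (hq1 : ∫ x in D, q x = 1)
    (hint : ∀ ϑ ∈ Θ, IntegrableOn (fun x => q x ^ α * p ϑ x ^ (1 - α)) D volume)
    (hpos : ∀ ϑ ∈ Θ, 0 < ∫ x in D, q x ^ α * p ϑ x ^ (1 - α))
    (hintc : ∀ ϑ ∈ Θ, ∀ i,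
      IntegrableOn (fun x => (q x / p ϑ x) ^ α * c x i * p ϑ x) D volume)
    (hintc' : ∀ ϑ ∈ Θ, ∀ i, IntegrableOn (fun x => c x i * p ϑ x) D volume)
    (θ : Fin m → ℝ) (hθ : θ ∈ Θ) (j : Fin m) :
    HasDerivAt
      (fun t => (1/(α - 1)) *
        Real.log (∫ x in D, q x ^ α * p (Function.update θ j t) x ^ (1 - α)))
      ((∫ x in D, c x j * p θ x) -
        (∫ x in D, (q x / p θ x) ^ α * c x j * p θ x) /
          (∫ x in D, (q x / p θ x) ^ α * p θ x))
      (θ j) := by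
  obtain ⟨hα0, hα1⟩ := hα
  have hα1' : α - 1 ≠ 0 := by linarith
  have h1α : (1 : ℝ) - α ≠ 0 := by linarith
  set t₀ : ℝ := θ j with ht₀
  set B : (Fin d → ℝ) → ℝ := fun x => (∑ i, c x i * θ i) - c x j * θ j with hB
  have hsum : ∀ (t : ℝ) (x : Fin d → ℝ),
      (∑ i, c x i * Function.update θ j t i) = B x + t * c x j := by
    intro t x
    have he : (fun i => c x i * Function.update θ j t i)
        = Function.update (fun i => c x i * θ i) j (c x j * t) := by
      funext i
      by_cases h : i = j
      · subst h; simp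
      · simp [Function.update_of_ne h]
    rw [he, Finset.sum_update_of_mem (Finset.mem_univ j)]
    have h2 := Finset.sum_eq_sum_sdiff_singleton_add (Finset.mem_univ j)
      (fun i => c x i * θ i)
    simp only [hB]
    rw [h2]
    ring
  have hBsum : ∀ x : Fin d → ℝ, B x + t₀ * c x j = ∑ i, c x i * θ i := by
    intro x; simp only [hB]; ring
  have hu : Continuous (fun t : ℝ => Function.update θ j t) := by
    apply continuous_pi
    intro i
    by_cases h : i = j
    · subst h; simpa using continuous_id'
    · simpa [Function.update_of_ne h] using (continuous_const : Continuous fun _ : ℝ => θ i)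
  have hUopen : IsOpen {t : ℝ | Function.update θ j t ∈ Θ} := hΘopen.preimage hu
  have ht₀mem : t₀ ∈ {t : ℝ | Function.update θ j t ∈ Θ} := by
    simp only [Set.mem_setOf_eq, Function.update_eq_self]; rw [ht₀, Function.update_eq_self]; exact hθ
  obtain ⟨ε, hε, hball⟩ := Metric.isOpen_iff.mp hUopen t₀ ht₀mem
  set δ : ℝ := ε / 2 with hδdef
  have hδ : 0 < δ := by positivity
  have hmem : ∀ t : ℝ, |t - t₀| ≤ δ → Function.update θ j t ∈ Θ := by
    intro t ht
    apply hball
    rw [Metric.mem_ball, Real.dist_eq]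
    calc |t - t₀| ≤ δ := ht
      _ < ε := by rw [hδdef]; linarith
  have ht₀Θ : Function.update θ j t₀ ∈ Θ := hmem t₀ (by simpa using hδ.le)
  have hppos : ∀ (ϑ : Fin m → ℝ) (x : Fin d → ℝ), 0 < p ϑ x := by
    intro ϑ x; rw [hp]; exact Real.exp_pos _
  have hcj : Measurable fun x => c x j := (measurable_pi_apply j).comp hc
  have hBmeas : Measurable B := by
    apply Measurable.sub
    · exact Finset.measurable_sum _ (fun i _ => ((measurable_pi_apply i).comp hc).mul_const _)
    · exact hcj.mul_const _
  set Z : ℝ → ℝ := fun t => ∫ x in D, Real.exp (B x) * Real.exp (t * c x j) with hZdef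
  set F : ℝ → ℝ := fun t => ∫ x in D,
    (q x ^ α * Real.exp ((1 - α) * B x)) * Real.exp (t * ((1 - α) * c x j)) with hFdef
  have hZint : ∀ t : ℝ, Function.update θ j t ∈ Θ →
      IntegrableOn (fun x => Real.exp (B x) * Real.exp (t * c x j)) D volume := by
    intro t ht
    rw [hΘ] at ht
    refine ht.congr ?_
    filter_upwards with x
    rw [hsum t x, Real.exp_add]
  have hDpos : 0 < volume D := by
    by_contra h
    push_neg at h
    have h0 : volume D = 0 := le_antisymm h (zero_le)
    have hz : volume.restrict D = 0 := by rw [Measure.restrict_eq_zero]; exact h0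
    have h2 := hpos θ hθ
    rw [show (∫ x in D, q x ^ α * p θ x ^ (1 - α))
        = ∫ x, q x ^ α * p θ x ^ (1 - α) ∂(volume.restrict D) from rfl, hz] at h2
    simp at h2
  have hZpos : ∀ t : ℝ, Function.update θ j t ∈ Θ → 0 < Z t := by
    intro t ht
    simp only [hZdef]
    rw [MeasureTheory.integral_pos_iff_support_of_nonneg_ae
      (Eventually.of_forall fun x => le_of_lt (mul_pos (Real.exp_pos _) (Real.exp_pos _)))
      (hZint t ht)]
    have hsupp : (Function.support fun x => Real.exp (B x) * Real.exp (t * c x j))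
        = Set.univ :=
      Set.eq_univ_of_forall fun x => (mul_pos (Real.exp_pos _) (Real.exp_pos _)).ne'
    rw [hsupp, Measure.restrict_apply_univ]
    exact hDpos
  have hψZ : ∀ t : ℝ, ψ (Function.update θ j t) = Real.log (Z t) := by
    intro t
    simp only [hψ, hZdef]
    congr 1
    apply integral_congr_ae
    filter_upwards with x
    rw [hsum t x, Real.exp_add]
  have hptpow : ∀ (t : ℝ) (x : Fin d → ℝ),
      q x ^ α * p (Function.update θ j t) x ^ (1 - α)
        = Real.exp (-((1 - α) * ψ (Function.update θ j t))) *
          ((q x ^ α * Real.exp ((1 - α) * B x)) * Real.exp (t * ((1 - α) * c x j))) := by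
    intro t x
    have h1 : p (Function.update θ j t) x ^ (1 - α)
        = Real.exp ((B x + t * c x j - ψ (Function.update θ j t)) * (1 - α)) := by
      simp only [hp]
      rw [← Real.exp_mul, hsum t x]
    rw [h1]
    rw [show Real.exp (-((1 - α) * ψ (Function.update θ j t))) *
        ((q x ^ α * Real.exp ((1 - α) * B x)) * Real.exp (t * ((1 - α) * c x j)))
      = q x ^ α * Real.exp (-((1 - α) * ψ (Function.update θ j t))
          + ((1 - α) * B x + t * ((1 - α) * c x j))) from by
        rw [Real.exp_add, Real.exp_add]; ring]
    congr 1
    rw [Real.exp_eq_exp]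
    ring
  have hFrel : ∀ t : ℝ, (∫ x in D, q x ^ α * p (Function.update θ j t) x ^ (1 - α))
      = Real.exp (-((1 - α) * ψ (Function.update θ j t))) * F t := by
    intro t
    simp only [hFdef]
    rw [← integral_const_mul]
    apply integral_congr_ae
    filter_upwards with x
    exact hptpow t x
  have hFint : ∀ t : ℝ, Function.update θ j t ∈ Θ →
      IntegrableOn (fun x =>
        (q x ^ α * Real.exp ((1 - α) * B x)) * Real.exp (t * ((1 - α) * c x j))) D volume := by
    intro t ht
    have h1 := hint _ ht
    have he : (fun x => (q x ^ α * Real.exp ((1 - α) * B x)) * Real.exp (t * ((1 - α) * c x j)))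
        = fun x => Real.exp ((1 - α) * ψ (Function.update θ j t)) *
            (q x ^ α * p (Function.update θ j t) x ^ (1 - α)) := by
      funext x
      rw [hptpow t x,
        ← mul_assoc (Real.exp ((1 - α) * ψ (Function.update θ j t))),
        ← Real.exp_add, add_neg_cancel, Real.exp_zero, one_mul]
    rw [he]
    exact h1.const_mul _
  have hFpos : ∀ t : ℝ, Function.update θ j t ∈ Θ → 0 < F t := by
    intro t ht
    have h1 := hpos _ ht
    rw [hFrel t] at h1
    nlinarith [Real.exp_pos (-((1 - α) * ψ (Function.update θ j t)))]
  have hZderiv : HasDerivAt Z (∫ x in D, Real.exp (B x) * c x j * Real.exp (t₀ * c x j)) t₀ := by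
    apply aux_hasDerivAt_integral_exp (volume.restrict D) _ _
      ((Real.measurable_exp.comp hBmeas).aestronglyMeasurable) hcj.aestronglyMeasurable t₀ δ hδ
    · exact hZint t₀ ht₀Θ
    · exact hZint (t₀ + δ) (hmem _ (by rw [add_sub_cancel_left, abs_of_pos hδ]))
    · exact hZint (t₀ - δ) (hmem _ (by rw [sub_sub_cancel_left, abs_neg, abs_of_pos hδ]))
  have hqα : Measurable fun x => q x ^ α :=
    (Real.continuous_rpow_const hα0.le).measurable.comp hqmeas
  have hf₂meas : AEStronglyMeasurable
      (fun x => q x ^ α * Real.exp ((1 - α) * B x)) (volume.restrict D) :=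
    (hqα.mul (Real.measurable_exp.comp (hBmeas.const_mul _))).aestronglyMeasurable
  have hFderiv : HasDerivAt F (∫ x in D,
      (q x ^ α * Real.exp ((1 - α) * B x)) * ((1 - α) * c x j) *
        Real.exp (t₀ * ((1 - α) * c x j))) t₀ := by
    apply aux_hasDerivAt_integral_exp (volume.restrict D) _ _ hf₂meas
      ((hcj.const_mul _).aestronglyMeasurable) t₀ δ hδ
    · exact hFint t₀ ht₀Θ
    · exact hFint (t₀ + δ) (hmem _ (by rw [add_sub_cancel_left, abs_of_pos hδ]))
    · exact hFint (t₀ - δ) (hmem _ (by rw [sub_sub_cancel_left, abs_neg, abs_of_pos hδ]))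
  set Z' : ℝ := ∫ x in D, Real.exp (B x) * c x j * Real.exp (t₀ * c x j) with hZ'def
  set F' : ℝ := ∫ x in D,
      (q x ^ α * Real.exp ((1 - α) * B x)) * ((1 - α) * c x j) *
        Real.exp (t₀ * ((1 - α) * c x j)) with hF'def
  have hZt₀ : 0 < Z t₀ := hZpos t₀ ht₀Θ
  have hFt₀ : 0 < F t₀ := hFpos t₀ ht₀Θ
  have hG : HasDerivAt (fun t => Real.log (Z t) + (1/(α-1)) * Real.log (F t))
      (Z' / Z t₀ + (1/(α-1)) * (F' / F t₀)) t₀ :=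
    (hZderiv.log hZt₀.ne').add ((hFderiv.log hFt₀.ne').const_mul _)
  have hEq : (fun t => (1/(α - 1)) *
      Real.log (∫ x in D, q x ^ α * p (Function.update θ j t) x ^ (1 - α)))
      =ᶠ[nhds t₀] (fun t => Real.log (Z t) + (1/(α-1)) * Real.log (F t)) := by
    filter_upwards [Metric.ball_mem_nhds t₀ hδ] with t ht
    have htΘ : Function.update θ j t ∈ Θ := hmem t (le_of_lt (by
      rw [Metric.mem_ball, Real.dist_eq] at ht; exact ht))
    rw [hFrel t, Real.log_mul (Real.exp_ne_zero _) (hFpos t htΘ).ne', Real.log_exp, hψZ t]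
    field_simp
    ring
  have hψθZ : Real.exp (ψ θ) = Z t₀ := by
    have h1 := hψZ t₀
    rw [Function.update_eq_self] at h1
    rw [h1, Real.exp_log hZt₀]
  have e1 : (∫ x in D, c x j * p θ x) = Z' / Z t₀ := by
    have hpt : ∀ x : Fin d → ℝ, c x j * p θ x
        = Real.exp (-(ψ θ)) * (Real.exp (B x) * c x j * Real.exp (t₀ * c x j)) := by
      intro x
      have h1 : p θ x = Real.exp (B x + t₀ * c x j - ψ θ) := by
        simp only [hp]; rw [← hBsum x]
      rw [h1]
      rw [show Real.exp (-(ψ θ)) * (Real.exp (B x) * c x j * Real.exp (t₀ * c x j))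
        = c x j * Real.exp (-(ψ θ) + (B x + t₀ * c x j)) from by
          rw [Real.exp_add, Real.exp_add]; ring]
      congr 1
      rw [Real.exp_eq_exp]
      ring
    rw [show (∫ x in D, c x j * p θ x)
        = ∫ x in D, Real.exp (-(ψ θ)) * (Real.exp (B x) * c x j * Real.exp (t₀ * c x j)) from
      integral_congr_ae (Eventually.of_forall fun x => hpt x)]
    rw [integral_const_mul, ← hZ'def, Real.exp_neg, hψθZ]
    rw [div_eq_mul_inv, mul_comm]
  have eD : (∫ x in D, (q x / p θ x) ^ α * p θ x)
      = Real.exp (-((1 - α) * ψ θ)) * F t₀ := by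
    have hpt : ∀ x ∈ D, (q x / p θ x) ^ α * p θ x
        = Real.exp (-((1 - α) * ψ θ)) *
          ((q x ^ α * Real.exp ((1 - α) * B x)) * Real.exp (t₀ * ((1 - α) * c x j))) := by
      intro x hx
      have hqx := hq0 x hx
      have hpx := hppos θ x
      have hpow : (q x / p θ x) ^ α * p θ x = q x ^ α * p θ x ^ (1 - α) := by
        rw [Real.div_rpow hqx.le hpx.le, Real.rpow_sub hpx, Real.rpow_one]
        field_simp
      rw [hpow]
      have h2 := hptpow t₀ x
      rw [Function.update_eq_self] at h2
      exact h2
    rw [setIntegral_congr_fun hD hpt, integral_const_mul]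
  have eN : (∫ x in D, (q x / p θ x) ^ α * c x j * p θ x)
      = (Real.exp (-((1 - α) * ψ θ)) / (1 - α)) * F' := by
    have hpt : ∀ x ∈ D, (q x / p θ x) ^ α * c x j * p θ x
        = (Real.exp (-((1 - α) * ψ θ)) / (1 - α)) *
          ((q x ^ α * Real.exp ((1 - α) * B x)) * ((1 - α) * c x j) *
            Real.exp (t₀ * ((1 - α) * c x j))) := by
      intro x hx
      have hqx := hq0 x hx
      have hpx := hppos θ x
      have hpow : (q x / p θ x) ^ α * c x j * p θ x
          = (q x ^ α * p θ x ^ (1 - α)) * c x j := by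
        rw [Real.div_rpow hqx.le hpx.le, Real.rpow_sub hpx, Real.rpow_one]
        field_simp
      rw [hpow]
      have h2 := hptpow t₀ x
      rw [Function.update_eq_self] at h2
      rw [h2]
      field_simp
    rw [setIntegral_congr_fun hD hpt, integral_const_mul, ← hF'def]
  refine HasDerivAt.congr_of_eventuallyEq ?_ hEq
  refine hG.congr_deriv ?_
  rw [e1, eN, eD]
  have hexp : Real.exp (-((1 - α) * ψ θ)) ≠ 0 := Real.exp_ne_zero _
  field_simp
  ring
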